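/- For every nonzero lattice point l ∈ ℤ²\{0} and every N ≥ 1, the sum over k in Λ_N = {k ∈ ℤ²\{0} : |k| ≤ N} of C_{k,l}² equals (|l|²/2)·Σ_{k∈Λ_N} 1/|k|², where C_{k,l} = (k^⊥·l)/|k|² and k^⊥ = (k₂, -k₁). -/

import Mathlib

open scoped BigOperators
open MeasureTheory

noncomputable section

/-- `|k|² = k₁² + k₂²` for a lattice point `k ∈ ℤ²`, as a real number. -/
def nsq (k : ℤ × ℤ) : ℝ := (k.1 : ℝ) ^ 2 + (k.2 : ℝ) ^ 2

/-- `k^⊥ = (k₂, -k₁)`. -/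
def perp (k : ℤ × ℤ) : ℤ × ℤ := (k.2, -k.1)

/-- Euclidean inner product of two lattice points, as a real number. -/
def dotR (a b : ℤ × ℤ) : ℝ := (a.1 : ℝ) * (b.1 : ℝ) + (a.2 : ℝ) * (b.2 : ℝ)

/-- `C_{k,l} = (k^⊥ · l)/|k|²`. -/
def Ckl (k l : ℤ × ℤ) : ℝ := dotR (perp k) l / nsq k

/-- `D_{k,l} = (k · l)/|k|²`. -/
def Dkl (k l : ℤ × ℤ) : ℝ := dotR k l / nsq k

/-- `Λ_N = {k ∈ ℤ²\{0} : |k| ≤ N}` as a finite set. -/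
def ΛN (N : ℤ) : Finset (ℤ × ℤ) :=
  (Finset.Icc (-N, -N) (N, N)).filter (fun k => k ≠ 0 ∧ k.1 ^ 2 + k.2 ^ 2 ≤ N ^ 2)

lemma mem_ΛN {N : ℤ} (hN : 1 ≤ N) {k : ℤ × ℤ} :
    k ∈ ΛN N ↔ k ≠ 0 ∧ k.1 ^ 2 + k.2 ^ 2 ≤ N ^ 2 := by
  constructor
  · intro h
    exact (Finset.mem_filter.mp h).2
  · intro ⟨h0, hb⟩
    refine Finset.mem_filter.mpr ⟨?_, h0, hb⟩
    simp only [Finset.mem_Icc, Prod.le_def]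
    refine ⟨⟨?_, ?_⟩, ?_, ?_⟩ <;>
      nlinarith [sq_nonneg k.1, sq_nonneg k.2, sq_nonneg (k.1 + N), sq_nonneg (k.1 - N),
        sq_nonneg (k.2 + N), sq_nonneg (k.2 - N)]

lemma nsq_pos {k : ℤ × ℤ} (hk : k ≠ 0) : 0 < nsq k := by
  have : (k.1 : ℝ) ≠ 0 ∨ (k.2 : ℝ) ≠ 0 := by
    by_contra h
    push_neg at h
    exact hk (Prod.ext (by exact_mod_cast h.1) (by exact_mod_cast h.2))
  unfold nsq
  rcases this with h | h
  · nlinarith [sq_nonneg (k.2 : ℝ), pow_pos (abs_pos.mpr h) 2, sq_abs (k.1 : ℝ)]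
  · nlinarith [sq_nonneg (k.1 : ℝ), pow_pos (abs_pos.mpr h) 2, sq_abs (k.2 : ℝ)]

theorem sum_Ckl_sq (l : ℤ × ℤ) (hl : l ≠ 0) (N : ℤ) (hN : 1 ≤ N) :
    ∑ k ∈ ΛN N, (Ckl k l) ^ 2 = (nsq l / 2) * ∑ k ∈ ΛN N, 1 / nsq k := by
  have hCD : ∑ k ∈ ΛN N, (Ckl k l) ^ 2 = ∑ k ∈ ΛN N, (Dkl k l) ^ 2 := by
    refine Finset.sum_nbij' (fun k => perp k) (fun k => (-k.2, k.1)) ?_ ?_ ?_ ?_ ?_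
    · intro k hk
      rw [mem_ΛN hN] at hk ⊢
      refine ⟨?_, ?_⟩
      · simp [perp, Prod.ext_iff] at hk ⊢
        omega
      · simp only [perp]
        nlinarith [hk.2]
    · intro k hk
      rw [mem_ΛN hN] at hk ⊢
      refine ⟨?_, ?_⟩
      · simp [Prod.ext_iff] at hk ⊢; omega
      · simp only
        nlinarith [hk.2]
    · intro k _; simp [perp]
    · intro k _; simp [perp]
    · intro k _
      simp only [Ckl, Dkl, perp, dotR, nsq]
      push_cast
      ring
  have key : ∀ k ∈ ΛN N, (Ckl k l) ^ 2 + (Dkl k l) ^ 2 = nsq l * (1 / nsq k) := by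
    intro k hk
    have hk0 : k ≠ 0 := ((mem_ΛN hN).mp hk).1
    have h := nsq_pos hk0
    simp only [Ckl, Dkl, div_pow, ← add_div, mul_one_div]
    rw [div_eq_div_iff (by positivity) h.ne']
    simp only [dotR, perp, nsq]
    push_cast
    ring
  have h2 : 2 * ∑ k ∈ ΛN N, (Ckl k l) ^ 2 = nsq l * ∑ k ∈ ΛN N, 1 / nsq k := by
    rw [two_mul]
    nth_rewrite 2 [hCD]
    rw [← Finset.sum_add_distrib, Finset.mul_sum]
    exact Finset.sum_congr rfl key
  linarith
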